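/- arXiv:1406.6848 — 2 statements merged into one kernel-verified Lean document; each statement's English description precedes it below -/
import Mathlib

section
/- For every real number t with |t| < π, the series Σ_{r≥0} E_{2r+1}(0) · t^{2r}/(2r)! converges and equals −(1/2)·sech²(t/2). -/
open Complex MeasureTheory
open scoped Real

noncomputable section

/-- `p(n)`: the number of partitions of `n`. -/
def partitionCount (n : ℕ) : ℕ := Fintype.card (Nat.Partition n)

/-- The rank of a partition: its largest part minus the number of its parts. -/
def partitionRank {n : ℕ} (lam : Nat.Partition n) : ℤ :=
  (lam.parts.sup : ℤ) - lam.parts.card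

/-- `N(m,n)`: the number of partitions of `n` with rank `m`. -/
def rankCount (m : ℤ) (n : ℕ) : ℕ :=
  Fintype.card {lam : Nat.Partition n // partitionRank lam = m}

/-- `sech` -/
def sech (t : ℝ) : ℝ := 1 / Real.cosh t

/-- `β = π / √(6n)` -/
def betav (n : ℕ) : ℝ := π / Real.sqrt (6 * n)

/-- `s = β (1 + i x m^{-1/3})` -/
def sval (n m : ℕ) (x : ℝ) : ℂ :=
  (betav n : ℂ) * (1 + I * (x : ℂ) * ((m : ℝ) ^ (-(1 : ℝ)/3) : ℝ))

/-- The rank generating function `R(z; τ)`. -/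
def rankGen (z τ : ℂ) : ℂ :=
  ∑' n : ℕ, ∑' m : ℤ,
    (rankCount m n : ℂ) * Complex.exp (2 * π * I * z) ^ m * Complex.exp (2 * π * I * τ) ^ n

/-- The Dedekind eta function. -/
def dedekindEta (τ : ℂ) : ℂ :=
  Complex.exp (π * I * τ / 12) * ∏' n : ℕ, (1 - Complex.exp (2 * π * I * τ) ^ (n + 1))

/-- The Jacobi theta function `θ(z;τ)`. -/
def thetaFn (z τ : ℂ) : ℂ :=
  I * Complex.exp (π * I * τ / 4) * Complex.exp (π * I * z) *
    ∏' n : ℕ,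
      ((1 - Complex.exp (2 * π * I * τ) ^ (n + 1)) *
        (1 - Complex.exp (2 * π * I * z) * Complex.exp (2 * π * I * τ) ^ (n + 1)) *
        (1 - (Complex.exp (2 * π * I * z))⁻¹ * Complex.exp (2 * π * I * τ) ^ n))

/-- The Appell–Lerch sum `A₁(u,v;τ)`. -/
def A1 (u v τ : ℂ) : ℂ :=
  Complex.exp (π * I * u) *
    ∑' n : ℤ, (-1 : ℂ) ^ n * Complex.exp (2 * π * I * τ) ^ ((n ^ 2 + n) / 2) *
      Complex.exp (2 * π * I * n * v) /
        (1 - Complex.exp (2 * π * I * u) * Complex.exp (2 * π * I * τ) ^ n)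

/-- The Mordell integral `h(z;τ)`. -/
def mordellH (z τ : ℂ) : ℂ :=
  ∫ w : ℝ, Complex.exp (π * I * τ * w ^ 2 - 2 * π * z * w) / Complex.cosh (π * w)

/-- `R_m(τ)`. -/
def rankGenCoeff (m : ℤ) (τ : ℂ) : ℂ :=
  ∫ z in (-1/2 : ℝ)..(1/2 : ℝ), rankGen z τ * Complex.exp (-2 * π * I * m * z)

/-- `g_m(z;τ)`. -/
def gFun (m : ℕ) (z τ : ℂ) : ℂ :=
  if m % 3 = 0 then
    -A1 (3 * z) τ (3 * τ) * Complex.exp (3 * π * I * z) +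
      A1 (3 * z) (-τ) (3 * τ) * Complex.exp (-3 * π * I * z)
  else if m % 3 = 1 then
    -A1 (3 * z) (-τ) (3 * τ) * Complex.exp (-π * I * z) -
      I * (dedekindEta (3 * τ)) ^ 3 / thetaFn (3 * z) (3 * τ) * Complex.exp (-π * I * z)
  else
    A1 (3 * z) τ (3 * τ) * Complex.exp (π * I * z) +
      I * (dedekindEta (3 * τ)) ^ 3 / thetaFn (3 * z) (3 * τ) * Complex.exp (π * I * z)

/-- `E_k(0)` via the generating function `2e^{xz}/(e^z+1)` at `x = 0`. -/
def eulerZero (k : ℕ) : ℚ :=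
  (k.factorial : ℚ) *
    PowerSeries.coeff k (PowerSeries.C (R := ℚ) 2 * (PowerSeries.exp ℚ + 1)⁻¹)

/-- Generating function of partitions. -/
def partitionGen (q : ℂ) : ℂ := ∏' n : ℕ, (1 - q ^ (n + 1))⁻¹

/-- membership in the lattice `ℤ + ℤτ`. -/
def inLattice (τ w : ℂ) : Prop := ∃ a b : ℤ, w = (a : ℂ) + (b : ℂ) * τ


namespace EulerAux
section QPart
open PowerSeries

def Aq (n : ℕ) : ℚ := (2 ^ n + 2) / n.factorial + (if n = 0 then 1 else 0)
def Dq (n : ℕ) : ℚ := eulerZero (n + 1) / n.factorial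
def Bq (n : ℕ) : ℚ := -2 / n.factorial

abbrev P : ℚ⟦X⟧ := PowerSeries.C (R := ℚ) 2 * (PowerSeries.exp ℚ + 1)⁻¹

lemma constCoeff : constantCoeff (R := ℚ) (exp ℚ + 1) ≠ 0 := by
  simp [constantCoeff_exp]

lemma coeff_P (k : ℕ) : coeff (R := ℚ) k P = eulerZero k / k.factorial := by
  rw [eulerZero]; field_simp

lemma deriv_exp : d⁄dX ℚ (exp ℚ) = exp ℚ := by
  ext n
  rw [coeff_derivative, coeff_exp, coeff_exp]
  simp [Nat.factorial_succ]
  field_simp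

lemma keyQ : (exp ℚ + 1) ^ 2 * (d⁄dX ℚ P) = PowerSeries.C (R := ℚ) (-2) * exp ℚ := by
  have h1 : d⁄dX ℚ P = PowerSeries.C (R := ℚ) 2 * (-(exp ℚ + 1)⁻¹ ^ 2 * d⁄dX ℚ (exp ℚ + 1)) := by
    rw [P, Derivation.leibniz, derivative_inv', derivative_C]
    simp [smul_eq_mul]
  have h2 : d⁄dX ℚ (exp ℚ + 1) = exp ℚ := by
    rw [map_add, deriv_exp]; simp
  have h3 : (exp ℚ + 1) * (exp ℚ + 1)⁻¹ = 1 := PowerSeries.mul_inv_cancel _ constCoeff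
  rw [h1, h2]
  have : (exp ℚ + 1) ^ 2 * (PowerSeries.C (R := ℚ) 2 * (-(exp ℚ + 1)⁻¹ ^ 2 * exp ℚ)) =
      PowerSeries.C (R := ℚ) 2 * (-(((exp ℚ + 1) * (exp ℚ + 1)⁻¹) ^ 2 * exp ℚ)) := by ring
  rw [this, h3]
  simp [map_neg]

lemma coeff_sq (i : ℕ) : coeff (R := ℚ) i ((exp ℚ + 1) ^ 2) = Aq i := by
  have h : (exp ℚ + 1) ^ 2 = rescale ((2 : ℕ) : ℚ) (exp ℚ) + (exp ℚ + exp ℚ) + 1 := by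
    rw [← exp_pow_eq_rescale_exp]; ring
  rw [h, Aq]
  simp [coeff_rescale, coeff_exp, coeff_one]
  field_simp
  ring

lemma coeff_dP (j : ℕ) : coeff (R := ℚ) j (d⁄dX ℚ P) = Dq j := by
  rw [coeff_derivative, coeff_P, Dq, Nat.factorial_succ]
  have h1 : ((j + 1).factorial : ℚ) ≠ 0 := Nat.cast_ne_zero.mpr (Nat.factorial_ne_zero _)
  have h2 : (j.factorial : ℚ) ≠ 0 := Nat.cast_ne_zero.mpr (Nat.factorial_ne_zero _)
  field_simp
  push_cast
  ring

lemma convQ (n : ℕ) :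
    ∑ ij ∈ Finset.HasAntidiagonal.antidiagonal n, Aq ij.1 * Dq ij.2 = Bq n := by
  have := congrArg (coeff (R := ℚ) n) keyQ
  rw [coeff_mul, coeff_C_mul, coeff_exp] at this
  simp only [coeff_sq, coeff_dP] at this
  rw [this, Bq]
  simp only [Algebra.algebraMap_self, RingHom.id_apply]
  field_simp

lemma oddQ (k : ℕ) : eulerZero (2 * k + 2) = 0 := by
  have hEP : (exp ℚ + 1) * P = PowerSeries.C (R := ℚ) 2 := by
    rw [P]
    have h3 : (exp ℚ + 1) * (exp ℚ + 1)⁻¹ = 1 := PowerSeries.mul_inv_cancel _ constCoeff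
    calc (exp ℚ + 1) * (PowerSeries.C (R := ℚ) 2 * (exp ℚ + 1)⁻¹)
        = PowerSeries.C (R := ℚ) 2 * ((exp ℚ + 1) * (exp ℚ + 1)⁻¹) := by ring
      _ = PowerSeries.C (R := ℚ) 2 := by rw [h3, mul_one]
  set F := (evalNegHom : ℚ⟦X⟧ →+* ℚ⟦X⟧) P with hF
  have h1 : (evalNegHom (exp ℚ) + 1) * F = PowerSeries.C (R := ℚ) 2 := by
    have := congrArg ((evalNegHom : ℚ⟦X⟧ →+* ℚ⟦X⟧)) hEP
    rw [map_mul, map_add, map_one] at this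
    rw [this]
    rw [evalNegHom]
    ext n
    simp only [coeff_rescale, coeff_C]
    split_ifs with h <;> simp [h]
  have h2 : exp ℚ * evalNegHom (exp ℚ) = 1 := exp_mul_exp_neg_eq_one
  have h4 : (exp ℚ + 1) * F = PowerSeries.C (R := ℚ) 2 * exp ℚ := by
    have := congrArg (· * exp ℚ) h1
    calc (exp ℚ + 1) * F = (exp ℚ * evalNegHom (exp ℚ) + exp ℚ) * F := by rw [h2]; ring
      _ = (evalNegHom (exp ℚ) + 1) * F * exp ℚ := by ring
      _ = PowerSeries.C (R := ℚ) 2 * exp ℚ := by rw [h1]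
  have h5 : (exp ℚ + 1) * (P + F) = (exp ℚ + 1) * PowerSeries.C (R := ℚ) 2 := by
    rw [mul_add, hEP, h4]; ring
  have hne : (exp ℚ + 1) ≠ 0 := fun h => constCoeff (by rw [h]; simp)
  have h6 : P + F = PowerSeries.C (R := ℚ) 2 := mul_left_cancel₀ hne h5
  have h7 := congrArg (coeff (R := ℚ) (2 * k + 2)) h6
  rw [map_add] at h7
  have h8 : coeff (R := ℚ) (2 * k + 2) F = coeff (R := ℚ) (2 * k + 2) P := by
    rw [hF, evalNegHom, coeff_rescale]
    have : (-1 : ℚ) ^ (2 * k + 2) = 1 := by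
      rw [pow_succ, pow_succ, pow_mul]
      norm_num
    rw [this, one_mul]
  rw [h8, coeff_C] at h7
  norm_num at h7
  have h9 : coeff (R := ℚ) (2 * k + 2) P = 0 := by rw [P, coeff_C_mul, h7, mul_zero]
  rw [eulerZero]
  rw [show (2 * k + 2) = 2 * k + 2 from rfl] at h9
  rw [h9, mul_zero]

end QPart

section CPart
open FormalMultilinearSeries
open FormalMultilinearSeries

lemma coeff_unique {r : ℝ} (hr : 0 < r) {c d : ℕ → ℂ} {f : ℂ → ℂ}
    (hc : ∀ z : ℂ, ‖z‖ < r → HasSum (fun n => c n * z ^ n) (f z))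
    (hd : ∀ z : ℂ, ‖z‖ < r → HasSum (fun n => d n * z ^ n) (f z)) : c = d := by
  have key : ∀ (c : ℕ → ℂ), (∀ z : ℂ, ‖z‖ < r → HasSum (fun n => c n * z ^ n) (f z)) →
      HasFPowerSeriesAt f (ofScalars ℂ c) 0 := by
    intro c hc
    refine HasFPowerSeriesOnBall.hasFPowerSeriesAt (r := ENNReal.ofReal r) ⟨?_, by simp [hr], ?_⟩
    · refine ENNReal.le_of_forall_nnreal_lt fun q hq => ?_
      have hq' : (q : ℝ) < r := by
        have h := (ENNReal.toReal_lt_toReal (by simp) (by simp)).mpr hq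
        simpa [ENNReal.toReal_ofReal hr.le] using h
      have hsum := (hc ((q : ℝ) : ℂ) (by simpa using hq')).summable
      have htend : Filter.Tendsto (fun n => ‖c n * ((q : ℝ) : ℂ) ^ n‖) Filter.atTop (nhds 0) := by
        simpa using hsum.tendsto_atTop_zero.norm
      apply FormalMultilinearSeries.le_radius_of_tendsto _ (l := 0)
      refine Filter.Tendsto.congr (fun n => ?_) htend
      rw [norm_mul, norm_pow, Complex.norm_real, Real.norm_eq_abs, _root_.abs_of_nonneg q.coe_nonneg,
        ofScalars_norm]
    · intro y hy
      rw [EMetric.mem_ball, edist_zero_right] at hy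
      have hy' : ‖y‖ < r := by
        have h := (ENNReal.toReal_lt_toReal (by simp) (by simp)).mpr hy
        simpa [ENNReal.toReal_ofReal hr.le] using h
      rw [zero_add]
      refine (hc y hy').congr_fun fun n => ?_
      rw [FormalMultilinearSeries.ofScalars_apply_eq, smul_eq_mul, mul_comm]
  exact (ofScalars_series_eq_iff ℂ c d).mp ((key c hc).eq_formalMultilinearSeries (key d hd))


/-- the function `-2 e^z/(e^z+1)^2` -/
def G (z : ℂ) : ℂ := -2 * Complex.exp z / (Complex.exp z + 1) ^ 2

lemma den_ne_zero {z : ℂ} (hz : ‖z‖ < π) : Complex.exp z + 1 ≠ 0 := by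
  intro h
  have h1 : Complex.exp z = -1 := by linear_combination h
  have h2 : Complex.exp (z - π * I) = 1 := by
    rw [Complex.exp_sub, h1, Complex.exp_pi_mul_I]
    norm_num
  rw [Complex.exp_eq_one_iff] at h2
  obtain ⟨n, hn⟩ := h2
  have hz' : z = (((2 * (n : ℝ) + 1 : ℝ)) : ℂ) * (π : ℝ) * I := by
    push_cast
    linear_combination hn
  rw [hz'] at hz
  have hnorm : ‖(((2 * (n : ℝ) + 1 : ℝ)) : ℂ) * (π : ℝ) * I‖ = |2 * (n : ℝ) + 1| * π := by
    rw [norm_mul, norm_mul, Complex.norm_real, Complex.norm_real, Complex.norm_I, mul_one,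
      Real.norm_eq_abs, Real.norm_eq_abs, _root_.abs_of_nonneg Real.pi_pos.le]
  rw [hnorm] at hz
  have h3 : (1 : ℝ) ≤ |2 * (n : ℝ) + 1| := by
    rcases le_or_gt 0 (n : ℝ) with h | h
    · rw [_root_.abs_of_nonneg (by linarith)]; linarith
    · have hn0 : n < 0 := by exact_mod_cast h
      have hn1' : n ≤ -1 := by omega
      have hn1 : (n : ℝ) ≤ -1 := by exact_mod_cast hn1'
      rw [_root_.abs_of_nonpos (by linarith)]; linarith
  nlinarith [Real.pi_pos]

lemma exists_series {r : ℝ} (hr0 : 0 < r) (hrπ : r < π) :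
    ∃ c : ℕ → ℂ, ∀ z : ℂ, ‖z‖ < r →
      HasSum (fun n => c n * z ^ n) (G z) ∧ Summable (fun n => ‖c n * z ^ n‖) := by
  set R : NNReal := r.toNNReal with hR
  have hRr : (R : ℝ) = r := Real.coe_toNNReal r hr0.le
  have hdiff : DifferentiableOn ℂ G (Metric.closedBall (0 : ℂ) R) := by
    intro z hz
    have hz' : ‖z‖ < π := by
      rw [Metric.mem_closedBall, dist_zero_right] at hz
      calc ‖z‖ ≤ R := hz
        _ = r := hRr
        _ < π := hrπ
    exact (((differentiable_exp z).const_mul (-2)).div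
      (((differentiable_exp z).add_const 1).pow 2)
      (pow_ne_zero 2 (den_ne_zero hz'))).differentiableWithinAt
  have hball := hdiff.hasFPowerSeriesOnBall (by simpa [hR] using hr0)
  set p := cauchyPowerSeries G 0 R
  refine ⟨p.coeff, fun z hz => ?_⟩
  have hmem : z ∈ Metric.eball (0 : ℂ) R := by
    rw [Metric.mem_eball, edist_zero_right]
    exact_mod_cast (show (‖z‖₊ : ℝ) < R by rw [hRr]; exact hz)
  constructor
  · have h := hball.hasSum hmem
    rw [zero_add] at h
    refine h.congr_fun fun n => ?_
    rw [FormalMultilinearSeries.apply_eq_pow_smul_coeff, smul_eq_mul, mul_comm]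
  · have hrad : z ∈ EMetric.ball (0 : ℂ) p.radius := EMetric.ball_subset_ball hball.r_le hmem
    have h := p.summable_norm_apply hrad
    refine h.congr fun n => ?_
    rw [FormalMultilinearSeries.apply_eq_pow_smul_coeff, smul_eq_mul, mul_comm]


/-- complex coefficients -/
def Ac (n : ℕ) : ℂ := (Aq n : ℂ)
def Bc (n : ℕ) : ℂ := (Bq n : ℂ)
def Dc (n : ℕ) : ℂ := (Dq n : ℂ)

lemma Ac_eq (n : ℕ) : Ac n = ((2 : ℂ) ^ n + 2) / n.factorial + (if n = 0 then 1 else 0) := by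
  rw [Ac, Aq]
  split_ifs <;> push_cast <;> ring

lemma Bc_eq (n : ℕ) : Bc n = -2 / n.factorial := by
  rw [Bc, Bq]; push_cast; ring

lemma hasSum_exp_div (w : ℂ) : HasSum (fun n => w ^ n / n.factorial) (Complex.exp w) := by
  rw [Complex.exp_eq_exp_ℂ]
  exact NormedSpace.expSeries_div_hasSum_exp w

lemma hasSum_A (z : ℂ) :
    HasSum (fun n => Ac n * z ^ n) ((Complex.exp z + 1) ^ 2) := by
  have h1 := hasSum_exp_div (2 * z)
  have h2 := (hasSum_exp_div z).mul_left 2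
  have h3 : HasSum (fun n : ℕ => if n = 0 then (1 : ℂ) else 0) 1 := hasSum_ite_eq 0 1
  have h := (h1.add h2).add h3
  have hval : Complex.exp (2 * z) + 2 * Complex.exp z + 1 = (Complex.exp z + 1) ^ 2 := by
    rw [two_mul, Complex.exp_add]; ring
  rw [hval] at h
  refine h.congr_fun fun n => ?_
  rw [Ac_eq]
  rcases eq_or_ne n 0 with rfl | hn
  · norm_num
  · have hfac : ((n.factorial : ℂ)) ≠ 0 := Nat.cast_ne_zero.mpr (Nat.factorial_ne_zero n)
    simp only [hn, if_false]
    field_simp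
    ring

lemma summable_ite : Summable (fun n : ℕ => if n = 0 then (1 : ℝ) else 0) :=
  (hasSum_ite_eq 0 1).summable

lemma norm_ratCast (q : ℚ) : ‖(q : ℂ)‖ = |(q : ℝ)| := by
  rw [← Complex.ofReal_ratCast, Complex.norm_real, Real.norm_eq_abs]

lemma summable_norm_A (z : ℂ) : Summable (fun n => ‖Ac n * z ^ n‖) := by
  have hb : Summable (fun n : ℕ =>
      (2 * ‖z‖) ^ n / n.factorial + 2 * (‖z‖ ^ n / n.factorial) + (if n = 0 then 1 else 0)) :=
    ((Real.summable_pow_div_factorial (2 * ‖z‖)).add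
      ((Real.summable_pow_div_factorial ‖z‖).mul_left 2)).add summable_ite
  refine Summable.of_nonneg_of_le (fun n => norm_nonneg _) (fun n => ?_) hb
  have hAq : (0 : ℚ) ≤ Aq n := by
    rw [Aq]; positivity
  have h1 : ‖Ac n * z ^ n‖ = (Aq n : ℝ) * ‖z‖ ^ n := by
    rw [norm_mul, norm_pow, Ac, norm_ratCast,
      _root_.abs_of_nonneg (show (0:ℝ) ≤ (Aq n : ℝ) by exact_mod_cast hAq)]
  rw [h1, Aq]
  rcases eq_or_ne n 0 with rfl | hn
  · norm_num
  · have hfac : (0 : ℝ) < n.factorial := by exact_mod_cast n.factorial_pos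
    simp only [hn, if_false]
    refine le_of_eq ?_
    push_cast
    rw [mul_pow]
    field_simp
    ring

lemma hasSum_B (z : ℂ) : HasSum (fun n => Bc n * z ^ n) (-2 * Complex.exp z) := by
  have h := (hasSum_exp_div z).mul_left (-2)
  refine h.congr_fun fun n => ?_
  rw [Bc_eq]; ring

lemma summable_norm_B (z : ℂ) : Summable (fun n => ‖Bc n * z ^ n‖) := by
  have hb : Summable (fun n : ℕ => 2 * (‖z‖ ^ n / n.factorial)) :=
    (Real.summable_pow_div_factorial ‖z‖).mul_left 2
  refine hb.congr fun n => ?_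
  rw [norm_mul, norm_pow, Bc_eq, norm_div]
  have hfac : (0:ℝ) < n.factorial := by exact_mod_cast n.factorial_pos
  rw [show ‖(-2 : ℂ)‖ = 2 by norm_num, show ‖((n.factorial : ℂ))‖ = (n.factorial : ℝ) by
    rw [← Complex.ofReal_natCast, Complex.norm_real, Real.norm_eq_abs, abs_of_pos hfac]]
  ring

/-- Cauchy product step -/
lemma conv_hasSum {c : ℕ → ℂ} {z : ℂ} (hG : HasSum (fun n => c n * z ^ n) (G z))
    (hGn : Summable (fun n => ‖c n * z ^ n‖)) (hz : ‖z‖ < π) :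
    HasSum (fun n => (∑ ij ∈ Finset.HasAntidiagonal.antidiagonal n, Ac ij.1 * c ij.2) * z ^ n)
      (-2 * Complex.exp z) := by
  set f : ℕ → ℂ := fun n => Ac n * z ^ n
  set g : ℕ → ℂ := fun n => c n * z ^ n
  have hfn : Summable fun n => ‖f n‖ := summable_norm_A z
  have hsn := summable_norm_sum_mul_antidiagonal_of_summable_norm hfn hGn
  have hs : Summable fun n => ∑ kl ∈ Finset.HasAntidiagonal.antidiagonal n, f kl.1 * g kl.2 := hsn.of_norm
  have htsum := tsum_mul_tsum_eq_tsum_sum_antidiagonal_of_summable_norm hfn hGn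
  have hval : (∑' n, f n) * (∑' n, g n) = -2 * Complex.exp z := by
    rw [(hasSum_A z).tsum_eq, hG.tsum_eq, G]
    have hden := pow_ne_zero 2 (den_ne_zero hz)
    rw [mul_div_cancel₀ _ hden]
  have h := hs.hasSum
  rw [← htsum, hval] at h
  refine h.congr_fun fun n => ?_
  rw [Finset.sum_mul]
  refine Finset.sum_congr rfl fun ij hij => ?_
  rw [Finset.HasAntidiagonal.mem_antidiagonal] at hij
  simp only [f, g]
  rw [← hij, pow_add]
  ring

lemma seq_unique {c d : ℕ → ℂ}
    (hc : ∀ n, ∑ ij ∈ Finset.HasAntidiagonal.antidiagonal n, Ac ij.1 * c ij.2 = Bc n)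
    (hd : ∀ n, ∑ ij ∈ Finset.HasAntidiagonal.antidiagonal n, Ac ij.1 * d ij.2 = Bc n) : c = d := by
  have hA0 : Ac 0 ≠ 0 := by
    rw [Ac_eq]; norm_num
  funext n
  induction n using Nat.strong_induction_on with
  | _ n ih =>
    have h1 := hc n
    have h2 := hd n
    rw [Finset.Nat.sum_antidiagonal_eq_sum_range_succ_mk] at h1 h2
    rw [Finset.sum_range_succ'] at h1 h2
    simp only [Nat.sub_zero] at h1 h2
    have hsum : ∑ i ∈ Finset.range n, Ac (i + 1) * c (n - (i + 1)) =
        ∑ i ∈ Finset.range n, Ac (i + 1) * d (n - (i + 1)) := by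
      refine Finset.sum_congr rfl fun i hi => ?_
      rw [Finset.mem_range] at hi
      rw [ih (n - (i + 1)) (by omega)]
    have : Ac 0 * c n = Ac 0 * d n := by
      have := h1.trans h2.symm
      rw [hsum] at this
      linear_combination this
    exact mul_left_cancel₀ hA0 this

lemma convC (n : ℕ) : ∑ ij ∈ Finset.HasAntidiagonal.antidiagonal n, Ac ij.1 * Dc ij.2 = Bc n := by
  have h := congrArg (fun q : ℚ => (q : ℂ)) (convQ n)
  push_cast at h
  simpa [Ac, Dc, Bc] using h

lemma hasSum_Dc (t : ℝ) (ht : |t| < π) :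
    HasSum (fun n => Dc n * (t : ℂ) ^ n) (G t) := by
  set r : ℝ := (|t| + π) / 2 with hr
  have hπ := Real.pi_pos
  have hr0 : 0 < r := by rw [hr]; positivity
  have hrπ : r < π := by rw [hr]; linarith
  have htr : |t| < r := by rw [hr]; linarith
  obtain ⟨c, hc⟩ := exists_series hr0 hrπ
  have hceq : (fun n => ∑ ij ∈ Finset.HasAntidiagonal.antidiagonal n, Ac ij.1 * c ij.2) = Bc := by
    refine coeff_unique hr0 (f := fun z => -2 * Complex.exp z) (fun z hz => ?_) (fun z hz => ?_)
    · exact conv_hasSum (hc z hz).1 (hc z hz).2 (hz.trans hrπ)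
    · exact hasSum_B z
  have hcD : c = Dc := seq_unique (fun n => congrFun hceq n) (fun n => convC n)
  have hts : ‖(t : ℂ)‖ < r := by rwa [Complex.norm_real, Real.norm_eq_abs]
  have := (hc (t : ℂ) hts).1
  rwa [hcD] at this

end CPart
end EulerAux

/-- generating series of odd Euler polynomial values at 0. -/
theorem euler_sech_series (t : ℝ) (ht : |t| < π) :
    HasSum (fun r : ℕ => (eulerZero (2 * r + 1) : ℝ) * t ^ (2 * r) / (2 * r).factorial)
      (-(1/2) * sech (t/2) ^ 2) := by
  have h := EulerAux.hasSum_Dc t ht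
  have hG : EulerAux.G (t : ℂ) = ((-(1/2) * sech (t/2) ^ 2 : ℝ) : ℂ) := by
    have hreal : -(1/2 : ℝ) * sech (t/2) ^ 2 = -2 * Real.exp t / (Real.exp t + 1) ^ 2 := by
      rw [sech, Real.cosh_eq]
      set u := Real.exp (t/2) with hu
      have hu0 : 0 < u := Real.exp_pos _
      have hinv : Real.exp (-(t/2)) = u⁻¹ := by rw [Real.exp_neg]
      have hsq : Real.exp t = u ^ 2 := by
        rw [pow_two, ← Real.exp_add]; ring_nf
      rw [hinv, hsq]
      have h5 : (0:ℝ) < u ^ 2 + 1 := by positivity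
      field_simp
    rw [EulerAux.G, hreal]
    push_cast [Complex.ofReal_exp]
    ring
  rw [hG] at h
  have hodd : ∀ n : ℕ, n ∉ Set.range (fun r : ℕ => 2 * r) → EulerAux.Dc n * (t:ℂ) ^ n = 0 := by
    intro n hn
    have hmod : n % 2 = 1 := by
      rcases Nat.even_or_odd n with ⟨k, hk⟩ | ⟨k, hk⟩
      · exact absurd ⟨k, by show 2 * k = n; omega⟩ hn
      · omega
    obtain ⟨k, hk⟩ : ∃ k, n = 2 * k + 1 := ⟨n / 2, by omega⟩
    have hz : eulerZero (n + 1) = 0 := by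
      rw [hk, show 2 * k + 1 + 1 = 2 * k + 2 by ring]
      exact EulerAux.oddQ k
    rw [EulerAux.Dc, EulerAux.Dq, hz]
    simp
  have hinj : Function.Injective (fun r : ℕ => 2 * r) := fun a b hab => by
    have h2ab : 2 * a = 2 * b := hab
    omega
  have h2 : HasSum (fun r : ℕ => EulerAux.Dc (2 * r) * (t:ℂ) ^ (2 * r))
      (((-(1/2) * sech (t/2) ^ 2 : ℝ) : ℂ)) :=
    (Function.Injective.hasSum_iff hinj hodd).mpr h
  have h4 : HasSum (fun r : ℕ =>
      (((eulerZero (2 * r + 1) : ℝ) * t ^ (2 * r) / (2 * r).factorial : ℝ) : ℂ))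
      (((-(1/2) * sech (t/2) ^ 2 : ℝ) : ℂ)) := by
    refine h2.congr_fun fun r => ?_
    rw [EulerAux.Dc, EulerAux.Dq]
    push_cast
    ring
  exact Complex.hasSum_ofReal.mp h4

end
end

section
/- For every nonnegative integer j, ∫_0^∞ z^{2j+1}/sinh(πz) dz = (−1)^{j+1} · E_{2j+1}(0)/2. -/
open Complex MeasureTheory
open scoped Real

noncomputable section

open Set in
lemma aux_int' (n : ℕ) {r : ℝ} (hr : 0 < r) :
    ∫ t in Set.Ioi (0:ℝ), t ^ n * Real.exp (-(r * t)) = n.factorial / r ^ (n+1) := by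
  have h := Real.integral_rpow_mul_exp_neg_mul_Ioi (a := (n:ℝ)+1) (r := r) (by positivity) hr
  rw [add_sub_cancel_right] at h
  rw [show ((n:ℝ)+1) = ((n+1 : ℕ):ℝ) by push_cast; ring, Real.rpow_natCast,
    show ((n+1:ℕ):ℝ) = (n:ℝ)+1 by push_cast; ring, Real.Gamma_nat_eq_factorial] at h
  rw [setIntegral_congr_fun measurableSet_Ioi
    (fun t _ => by simp [Real.rpow_natCast] : EqOn (fun t : ℝ => t ^ (n:ℝ) * Real.exp (-(r*t)))
      (fun t : ℝ => t ^ n * Real.exp (-(r*t))) (Ioi 0))] at h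
  rw [h, div_pow, one_pow]
  field_simp

open Set in
lemma aux_integrable' (n : ℕ) {r : ℝ} (hr : 0 < r) :
    MeasureTheory.IntegrableOn (fun t : ℝ => t ^ n * Real.exp (-(r * t))) (Set.Ioi 0) := by
  have h := integrableOn_rpow_mul_exp_neg_mul_rpow (s := (n:ℝ)) (p := 1)
    (by exact lt_of_lt_of_le (by norm_num) (Nat.cast_nonneg n)) one_pos hr
  refine h.congr_fun (fun t ht => ?_) measurableSet_Ioi
  dsimp only
  rw [Real.rpow_one, Real.rpow_natCast, neg_mul]

lemma aux_oddsum' (K : ℕ) (hK : K ≠ 0) :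
    HasSum (fun k : ℕ => 1 / ((2*k+1 : ℕ) : ℝ) ^ (2*K))
      ((1 - ((2:ℝ)^(2*K))⁻¹) *
        ((-1 : ℝ) ^ (K + 1) * (2 : ℝ) ^ (2 * K - 1) * π ^ (2 * K) *
          bernoulli (2 * K) / (Nat.factorial (2 * K)))) := by
  set Z : ℝ := (-1 : ℝ) ^ (K + 1) * (2 : ℝ) ^ (2 * K - 1) * π ^ (2 * K) *
          bernoulli (2 * K) / (Nat.factorial (2 * K)) with hZdef
  have hZ : HasSum (fun n : ℕ => 1 / (n : ℝ) ^ (2*K)) Z := hasSum_zeta_nat hK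
  have hE : HasSum (fun k : ℕ => 1 / ((2*k : ℕ) : ℝ) ^ (2*K)) (((2:ℝ)^(2*K))⁻¹ * Z) := by
    have h := hZ.mul_left ((2:ℝ)^(2*K))⁻¹
    have : (fun k : ℕ => ((2:ℝ)^(2*K))⁻¹ * (1 / (k : ℝ) ^ (2*K)))
        = fun k : ℕ => 1 / ((2*k : ℕ) : ℝ) ^ (2*K) := by
      funext k
      push_cast
      rw [mul_pow, one_div, one_div, mul_inv, ← one_div, ← one_div, div_mul_div_comm, one_mul]
    rwa [this] at h
  obtain ⟨S, hS⟩ : Summable (fun k : ℕ => 1 / ((2*k+1 : ℕ) : ℝ) ^ (2*K)) :=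
    hZ.summable.comp_injective (fun a b h => by omega)
  have htot : HasSum (fun n : ℕ => 1 / (n : ℝ) ^ (2*K)) (((2:ℝ)^(2*K))⁻¹ * Z + S) :=
    HasSum.even_add_odd hE hS
  have h0 : Z = ((2:ℝ)^(2*K))⁻¹ * Z + S := hZ.unique htot
  have hSval : S = (1 - ((2:ℝ)^(2*K))⁻¹) * Z := by linarith [h0]
  rwa [hSval] at hS

open PowerSeries in
lemma aux_euler' (j : ℕ) :
    eulerZero (2*j+1) = 2 * (1 - 2^(2*j+2)) * (bernoulli (2*j+2) : ℚ) / (2*j+2) := by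
  have h2 : (C (R := ℚ) 2) = (2 : ℚ⟦X⟧) := by
    rw [show (2:ℚ) = ((2:ℕ):ℚ) by norm_num, map_natCast]
    norm_num
  set B : ℚ⟦X⟧ := bernoulliPowerSeries ℚ with hBdef
  have hB : B * (PowerSeries.exp ℚ - 1) = X := bernoulliPowerSeries_mul_exp_sub_one ℚ
  have hexp1 : constantCoeff (R := ℚ) (PowerSeries.exp ℚ + 1) ≠ 0 := by
    simp [PowerSeries.constantCoeff_exp]
  have hinv : (PowerSeries.exp ℚ + 1)⁻¹ * (PowerSeries.exp ℚ + 1) = 1 :=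
    PowerSeries.inv_mul_cancel _ hexp1
  have hXr : rescale (2:ℚ) X = 2 * X := by
    rw [← h2]
    ext n
    rw [coeff_rescale, coeff_X, coeff_C_mul, coeff_X]
    split <;> simp_all
  have hB2 : rescale (2:ℚ) B * (PowerSeries.exp ℚ ^ 2 - 1) = 2 * X := by
    have h : PowerSeries.exp ℚ ^ 2 - 1 = rescale (2:ℚ) (PowerSeries.exp ℚ - 1) := by
      rw [map_sub, map_one, exp_pow_eq_rescale_exp]
      norm_num
    rw [h, ← map_mul, hB, hXr]
  have hne1 : PowerSeries.exp ℚ - 1 ≠ 0 := fun h => by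
    have := congrArg (coeff (R := ℚ) 1) h
    simp [PowerSeries.coeff_exp] at this
  have hne2 : PowerSeries.exp ℚ + 1 ≠ 0 := fun h => by
    have := congrArg (constantCoeff (R := ℚ)) h
    simp [PowerSeries.constantCoeff_exp] at this
  have key : X * (C (R := ℚ) 2 * (PowerSeries.exp ℚ + 1)⁻¹) = 2 * B - 2 * rescale (2:ℚ) B := by
    have hne : (PowerSeries.exp ℚ - 1) * (PowerSeries.exp ℚ + 1) ≠ 0 := mul_ne_zero hne1 hne2
    apply mul_right_cancel₀ hne
    rw [h2]
    calc X * ((2:ℚ⟦X⟧) * (PowerSeries.exp ℚ + 1)⁻¹)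
            * ((PowerSeries.exp ℚ - 1) * (PowerSeries.exp ℚ + 1))
        = (X * 2 * (PowerSeries.exp ℚ - 1))
            * ((PowerSeries.exp ℚ + 1)⁻¹ * (PowerSeries.exp ℚ + 1)) := by ring
      _ = X * 2 * (PowerSeries.exp ℚ - 1) := by rw [hinv, mul_one]
      _ = 2 * (B * (PowerSeries.exp ℚ - 1)) * (PowerSeries.exp ℚ + 1)
            - 2 * (rescale (2:ℚ) B * (PowerSeries.exp ℚ ^ 2 - 1)) := by
            rw [hB, hB2]; ring
      _ = (2 * B - 2 * rescale (2:ℚ) B)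
            * ((PowerSeries.exp ℚ - 1) * (PowerSeries.exp ℚ + 1)) := by ring
  have hco := congrArg (coeff (R := ℚ) (2*j+2)) key
  rw [show 2*j+2 = (2*j+1)+1 by ring, coeff_succ_X_mul] at hco
  have hrhs : coeff (R := ℚ) (2*j+2) (2 * B - 2 * rescale (2:ℚ) B)
      = 2 * (bernoulli (2*j+2) / (Nat.factorial (2*j+2)))
        - 2 * ((2:ℚ)^(2*j+2) * (bernoulli (2*j+2) / (Nat.factorial (2*j+2)))) := by
    rw [map_sub]
    rw [show (2 : ℚ⟦X⟧) * B = C (R := ℚ) 2 * B by rw [h2],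
        show (2 : ℚ⟦X⟧) * rescale (2:ℚ) B = C (R := ℚ) 2 * rescale (2:ℚ) B by rw [h2]]
    rw [coeff_C_mul, coeff_C_mul, coeff_rescale, hBdef, bernoulliPowerSeries, coeff_mk]
    simp [algebraMap]
  rw [show (2*j+1)+1 = 2*j+2 by ring, hrhs] at hco
  unfold eulerZero
  rw [hco]
  have hfac : (Nat.factorial (2*j+2) : ℚ) = (2*j+2) * (Nat.factorial (2*j+1)) := by
    rw [show 2*j+2 = (2*j+1)+1 by ring, Nat.factorial_succ]
    push_cast; ring
  have hf1 : (Nat.factorial (2*j+1) : ℚ) ≠ 0 := Nat.cast_ne_zero.mpr (Nat.factorial_ne_zero _)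
  have hf2 : ((2*j+2 : ℕ) : ℚ) ≠ 0 := by positivity
  rw [hfac]
  field_simp

lemma aux_pointwise' (n : ℕ) {z : ℝ} (hz : 0 < z) :
    z ^ n / Real.sinh (π * z)
      = (2 * z ^ n * Real.exp (-(π * z))) * (1 - Real.exp (-(2 * π * z)))⁻¹ := by
  have e1 : Real.exp (-(π*z)) * Real.exp (π*z) = 1 := by rw [← Real.exp_add]; simp
  have e2 : Real.exp (-(π*z)) * Real.exp (-(π*z)) = Real.exp (-(2*π*z)) := by
    rw [← Real.exp_add]; ring_nf
  have ha0 : 0 < Real.exp (-(π*z)) := Real.exp_pos _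
  have hba : 0 < Real.exp (π*z) - Real.exp (-(π*z)) := by
    rw [show Real.exp (π*z) - Real.exp (-(π*z)) = 2 * Real.sinh (π*z) by
      rw [Real.sinh_eq]; ring]
    have h : 0 < Real.sinh (π * z) := by
      rw [Real.sinh_pos_iff]; positivity
    linarith
  have key : 1 - Real.exp (-(2*π*z))
      = Real.exp (-(π*z)) * (Real.exp (π*z) - Real.exp (-(π*z))) := by
    rw [mul_sub, e1, e2]
  rw [key, Real.sinh_eq]
  rw [mul_inv]
  field_simp

/-- the Euler integral. -/
theorem euler_integral (j : ℕ) :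
    ∫ z in Set.Ioi (0 : ℝ), z ^ (2 * j + 1) / Real.sinh (π * z) =
      (-1 : ℝ) ^ (j + 1) * (eulerZero (2 * j + 1) : ℝ) / 2 := by
  set F : ℕ → ℝ → ℝ :=
    fun k z => 2 * (z ^ (2*j+1) * Real.exp (-(((2*k+1:ℕ):ℝ) * π * z))) with hF
  have hrpos : ∀ k : ℕ, 0 < ((2*k+1:ℕ):ℝ) * π := fun k => by positivity
  have hint : ∀ k, Integrable (F k) (volume.restrict (Set.Ioi 0)) := fun k =>
    ((aux_integrable' (2*j+1) (hrpos k)).const_mul 2)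
  have hval : ∀ k, (∫ z in Set.Ioi (0:ℝ), F k z)
      = 2 * ((Nat.factorial (2*j+1) : ℝ) / (((2*k+1:ℕ):ℝ)*π) ^ (2*j+2)) := by
    intro k
    simp only [hF]
    rw [MeasureTheory.integral_const_mul, aux_int' (2*j+1) (hrpos k)]
  set c : ℝ := 2 * (Nat.factorial (2*j+1) : ℝ) / π^(2*j+2) with hc
  have hfun : ∀ k : ℕ, 2 * ((Nat.factorial (2*j+1) : ℝ) / (((2*k+1:ℕ):ℝ)*π) ^ (2*j+2))
      = c * (1 / ((2*k+1:ℕ):ℝ)^(2*j+2)) := by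
    intro k
    have h1 : ((2*k+1:ℕ):ℝ) ≠ 0 := by positivity
    have h2 : (π:ℝ) ≠ 0 := Real.pi_ne_zero
    rw [mul_pow, hc]
    field_simp
  have hodd := aux_oddsum' (j+1) (Nat.succ_ne_zero j)
  rw [show 2*(j+1) = 2*j+2 by ring, show 2*j+2-1 = 2*j+1 by omega] at hodd
  have hnorm : ∀ k, (∫ z in Set.Ioi (0:ℝ), ‖F k z‖) = ∫ z in Set.Ioi (0:ℝ), F k z := by
    intro k
    refine setIntegral_congr_fun measurableSet_Ioi (fun z hz => ?_)
    have hz' : (0:ℝ) ≤ z := le_of_lt hz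
    exact Real.norm_of_nonneg (mul_nonneg (by norm_num)
      (mul_nonneg (pow_nonneg hz' _) (Real.exp_nonneg _)))
  have hsummable : Summable (fun k => ∫ z in Set.Ioi (0:ℝ), ‖F k z‖) :=
    ((hodd.summable).mul_left c).congr
      (fun k => by rw [← hfun k, ← hval k, ← hnorm k])
  have hinterchange :=
    MeasureTheory.integral_tsum_of_summable_integral_norm hint hsummable
  have hpt : ∀ z ∈ Set.Ioi (0:ℝ), (∑' k, F k z) = z^(2*j+1) / Real.sinh (π*z) := by
    intro z hz
    have hz' : (0:ℝ) < z := hz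
    have hterm : ∀ k : ℕ, F k z
        = (2 * z^(2*j+1) * Real.exp (-(π*z))) * (Real.exp (-(2*π*z)))^k := by
      intro k
      simp only [hF]
      have h : Real.exp (-(((2*k+1:ℕ):ℝ) * π * z))
          = Real.exp (-(π*z)) * Real.exp (-(2*π*z))^k := by
        rw [← Real.exp_nat_mul, ← Real.exp_add]
        congr 1
        push_cast; ring
      rw [h]; ring
    have hr1 : Real.exp (-(2*π*z)) < 1 :=
      Real.exp_lt_one_iff.mpr (neg_lt_zero.mpr (by positivity))
    calc (∑' k, F k z)
        = ∑' k : ℕ, (2 * z^(2*j+1) * Real.exp (-(π*z))) * (Real.exp (-(2*π*z)))^k :=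
          tsum_congr hterm
      _ = (2 * z^(2*j+1) * Real.exp (-(π*z))) * (1 - Real.exp (-(2*π*z)))⁻¹ := by
          rw [tsum_mul_left, tsum_geometric_of_lt_one (Real.exp_nonneg _) hr1]
      _ = z^(2*j+1) / Real.sinh (π*z) := (aux_pointwise' (2*j+1) hz').symm
  have lhs_eq : (∫ z in Set.Ioi (0:ℝ), z ^ (2*j+1) / Real.sinh (π * z))
      = ∑' k, ∫ z in Set.Ioi (0:ℝ), F k z := by
    rw [hinterchange]
    exact (setIntegral_congr_fun measurableSet_Ioi hpt).symm
  rw [lhs_eq]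
  have hsum_eq : (∑' k, ∫ z in Set.Ioi (0:ℝ), F k z)
      = c * ((1 - ((2:ℝ)^(2*j+2))⁻¹) *
          ((-1 : ℝ) ^ (j + 1 + 1) * (2 : ℝ) ^ (2*j+1) * π ^ (2*j+2) *
            bernoulli (2*j+2) / (Nat.factorial (2*j+2)))) := by
    rw [tsum_congr (fun k => by rw [hval k, hfun k])]
    exact (hodd.mul_left c).tsum_eq
  rw [hsum_eq, hc]
  have heuler : ((eulerZero (2*j+1) : ℚ) : ℝ)
      = 2 * (1 - 2^(2*j+2)) * ((bernoulli (2*j+2) : ℚ) : ℝ) / (2*j+2) := by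
    rw [aux_euler' j]; push_cast; ring
  rw [heuler]
  have hfac : (Nat.factorial (2*j+2) : ℝ) = (2*j+2) * (Nat.factorial (2*j+1)) := by
    rw [show 2*j+2 = (2*j+1)+1 by ring, Nat.factorial_succ]; push_cast; ring
  rw [hfac]
  have h1 : (Nat.factorial (2*j+1) : ℝ) ≠ 0 := Nat.cast_ne_zero.mpr (Nat.factorial_ne_zero _)
  have h2 : (π:ℝ) ≠ 0 := Real.pi_ne_zero
  have h3 : ((2*j+2 : ℕ):ℝ) ≠ 0 := by positivity
  have h4 : (2:ℝ)^(2*j+2) ≠ 0 := by positivity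
  field_simp
  ring


end
end
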